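/- Let K and E be nonempty finite types, let q : K × K → ℝ be nonnegative, and for each (a,b) let ρ_{a,b} be a positive semidefinite complex matrix indexed by E with trace 1. Then ‖Σ_{(a,b) : a ≠ b} q(a,b)·((Δ_a ⊗ Δ_b) − (Δ_a ⊗ Δ_a)) ⊗ ρ_{a,b}‖₁ = 2·Σ_{(a,b) : a ≠ b} q(a,b). (Equation (triangle2) in the proof of Proposition 1: the trace distance between the real key state and the state with Bob's key replaced by Alice's equals twice the probability that the keys differ.) -/

import Mathlib

open scoped Kronecker ComplexOrder
open Matrix

section aux
variable {m n : Type*} [Fintype m] [Fintype n] [DecidableEq m] [DecidableEq n]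

lemma kron_conjTranspose (A : Matrix m m ℂ) (B : Matrix n n ℂ) :
    (A ⊗ₖ B)ᴴ = Aᴴ ⊗ₖ Bᴴ := by
  ext ⟨i, j⟩ ⟨k, l⟩
  simp [Matrix.conjTranspose_apply, Matrix.kroneckerMap_apply]

omit [Fintype m] [Fintype n] [DecidableEq m] [DecidableEq n] in
lemma sub_kron (A B : Matrix m m ℂ) (C : Matrix n n ℂ) :
    (A - B) ⊗ₖ C = A ⊗ₖ C - B ⊗ₖ C := by
  ext ⟨i, j⟩ ⟨k, l⟩
  simp [Matrix.kroneckerMap_apply, sub_mul]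

lemma kron_posSemidef {A : Matrix m m ℂ} {B : Matrix n n ℂ}
    (hA : A.PosSemidef) (hB : B.PosSemidef) : (A ⊗ₖ B).PosSemidef := by
  exact hA.kronecker hB

omit [DecidableEq m] in
lemma smul_posSemidef {A : Matrix m m ℂ} (hA : A.PosSemidef) {r : ℝ} (hr : 0 ≤ r) :
    ((r : ℂ) • A).PosSemidef := by
  exact hA.smul (Complex.zero_le_real.mpr hr)

lemma sum_posSemidef {ι : Type*} (t : Finset ι) (f : ι → Matrix m m ℂ)
    (h : ∀ i ∈ t, (f i).PosSemidef) : (∑ i ∈ t, f i).PosSemidef := by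
  classical
  induction t using Finset.induction_on with
  | empty => simpa using Matrix.PosSemidef.zero
  | insert _ _ hx ih =>
    rw [Finset.sum_insert hx]
    exact Matrix.PosSemidef.add (h _ (Finset.mem_insert_self _ _))
      (ih fun i hi => h i (Finset.mem_insert_of_mem hi))

open scoped MatrixOrder in
lemma eq_traceNorm_mat {n : Type*} [Fintype n] [DecidableEq n] (X B : Matrix n n ℂ)
    (hB : B.PosSemidef) (h : B * B = Xᴴ * X) :
    B = ((Matrix.posSemidef_conjTranspose_mul_self X).1.eigenvectorUnitary : Matrix n n ℂ) *
      Matrix.diagonal (((↑) : ℝ → ℂ) ∘ (√·) ∘ (Matrix.posSemidef_conjTranspose_mul_self X).1.eigenvalues) *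
      (star (Matrix.posSemidef_conjTranspose_mul_self X).1.eigenvectorUnitary : Matrix n n ℂ) := by
  have hA := Matrix.posSemidef_conjTranspose_mul_self X
  have e1 : CFC.sqrt (Xᴴ * X) = B := CFC.sqrt_unique h hB.nonneg
  rw [CFC.sqrt_eq_real_sqrt _ hA.nonneg, cfcₙ_eq_cfc, hA.1.cfc_eq] at e1
  rw [← e1, Matrix.IsHermitian.cfc, Unitary.conjStarAlgAut_apply]
  rfl

end aux

/-- The trace norm `‖X‖₁ = tr √(Xᴴ X)` of a square complex matrix. -/
noncomputable def traceNorm {n : Type*} [Fintype n] [DecidableEq n] (X : Matrix n n ℂ) : ℝ :=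
  (((Matrix.posSemidef_conjTranspose_mul_self X).1.eigenvectorUnitary : Matrix n n ℂ) *
      Matrix.diagonal (((↑) : ℝ → ℂ) ∘ (√·) ∘ (Matrix.posSemidef_conjTranspose_mul_self X).1.eigenvalues) *
      (star (Matrix.posSemidef_conjTranspose_mul_self X).1.eigenvectorUnitary : Matrix n n ℂ)).trace.re

/-- **Equation (triangle2) in the proof of Proposition 1.** The trace distance between the
real key state and the state with Bob's key replaced by Alice's equals twice the
probability that the keys differ. -/
theorem statement2 {K E : Type*} [Fintype K] [DecidableEq K] [Nonempty K]
    [Fintype E] [DecidableEq E] [Nonempty E]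
    (q : K × K → ℝ) (hq : ∀ ab, 0 ≤ q ab)
    (ρ : K × K → Matrix E E ℂ)
    (hρ : ∀ ab, (ρ ab).PosSemidef) (hρtr : ∀ ab, (ρ ab).trace = 1) :
    traceNorm
        (∑ ab ∈ Finset.univ.filter (fun ab : K × K => ab.1 ≠ ab.2),
          (q ab : ℂ) •
            ((Matrix.single ab.1 ab.1 (1 : ℂ) ⊗ₖ Matrix.single ab.2 ab.2 (1 : ℂ)
              - Matrix.single ab.1 ab.1 (1 : ℂ) ⊗ₖ Matrix.single ab.1 ab.1 (1 : ℂ))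
              ⊗ₖ ρ ab))
      = 2 * ∑ ab ∈ Finset.univ.filter (fun ab : K × K => ab.1 ≠ ab.2), q ab := by
  classical
  set s := Finset.univ.filter (fun ab : K × K => ab.1 ≠ ab.2) with hs
  set D : K → Matrix K K ℂ := fun a => Matrix.single a a (1 : ℂ) with hD
  set P : Matrix ((K × K) × E) ((K × K) × E) ℂ :=
    ∑ ab ∈ s, (q ab : ℂ) • ((D ab.1 ⊗ₖ D ab.2) ⊗ₖ ρ ab) with hPdef
  set N : Matrix ((K × K) × E) ((K × K) × E) ℂ :=
    ∑ ab ∈ s, (q ab : ℂ) • ((D ab.1 ⊗ₖ D ab.1) ⊗ₖ ρ ab) with hNdef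
  have hDmul : ∀ a c : K, a ≠ c → D a * D c = 0 := fun a c h => by
    rw [hD]
    exact Matrix.single_mul_single_of_ne 1 a a c h 1
  have hmem : ∀ ab ∈ s, ab.1 ≠ ab.2 := by
    intro ab hab
    exact (Finset.mem_filter.mp hab).2
  -- X = P - N
  have hX : (∑ ab ∈ s, (q ab : ℂ) •
        ((D ab.1 ⊗ₖ D ab.2 - D ab.1 ⊗ₖ D ab.1) ⊗ₖ ρ ab)) = P - N := by
    rw [hPdef, hNdef, ← Finset.sum_sub_distrib]
    refine Finset.sum_congr rfl fun ab _ => ?_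
    rw [sub_kron, smul_sub]
  have hDpsd : ∀ a : K, (D a).PosSemidef := by
    intro a
    have hherm : (D a)ᴴ = D a := by
      ext i j
      simp [Matrix.conjTranspose_apply, hD, Matrix.single, Matrix.of_apply, and_comm,
        apply_ite (star : ℂ → ℂ)]
    have hsq : D a = (D a)ᴴ * D a := by
      rw [hherm, hD]
      simp only
      rw [Matrix.single_mul_single_same, mul_one]
    rw [hsq]
    exact Matrix.posSemidef_conjTranspose_mul_self _
  have hPpsd : P.PosSemidef :=
    sum_posSemidef _ _ fun ab _ =>
      smul_posSemidef (kron_posSemidef (kron_posSemidef (hDpsd ab.1) (hDpsd ab.2)) (hρ ab)) (hq ab)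
  have hNpsd : N.PosSemidef :=
    sum_posSemidef _ _ fun ab _ =>
      smul_posSemidef (kron_posSemidef (kron_posSemidef (hDpsd ab.1) (hDpsd ab.1)) (hρ ab)) (hq ab)
  -- products vanish
  have hPN : P * N = 0 := by
    rw [hPdef, hNdef, Finset.sum_mul_sum]
    refine Finset.sum_eq_zero fun ab hab => Finset.sum_eq_zero fun cd hcd => ?_
    rw [Matrix.smul_mul, Matrix.mul_smul, ← Matrix.mul_kronecker_mul, ← Matrix.mul_kronecker_mul]
    by_cases h : ab.2 = cd.1
    · rw [hDmul ab.1 cd.1 (h ▸ hmem ab hab)]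
      simp
    · rw [hDmul ab.2 cd.1 h]
      simp
  have hNP : N * P = 0 := by
    rw [hPdef, hNdef, Finset.sum_mul_sum]
    refine Finset.sum_eq_zero fun ab hab => Finset.sum_eq_zero fun cd hcd => ?_
    rw [Matrix.smul_mul, Matrix.mul_smul, ← Matrix.mul_kronecker_mul, ← Matrix.mul_kronecker_mul]
    by_cases h : ab.1 = cd.1
    · rw [h, hDmul cd.1 cd.2 (hmem cd hcd)]
      simp
    · rw [hDmul ab.1 cd.1 h]
      simp
  set X := ∑ ab ∈ s, (q ab : ℂ) •
        ((D ab.1 ⊗ₖ D ab.2 - D ab.1 ⊗ₖ D ab.1) ⊗ₖ ρ ab) with hXdef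
  have hsq : (P + N) ^ 2 = Xᴴ * X := by
    have hXPN : X = P - N := hX
    have hXH : Xᴴ = P - N := by
      rw [hXPN, Matrix.conjTranspose_sub, hPpsd.1, hNpsd.1]
    rw [hXH, hXPN, pow_two]
    rw [mul_sub, sub_mul, sub_mul, hPN, hNP]
    rw [add_mul, mul_add, mul_add]
    rw [hPN, hNP]
    abel
  have hsqrt : P + N = ((Matrix.posSemidef_conjTranspose_mul_self X).1.eigenvectorUnitary : Matrix _ _ ℂ) *
      Matrix.diagonal (((↑) : ℝ → ℂ) ∘ (√·) ∘ (Matrix.posSemidef_conjTranspose_mul_self X).1.eigenvalues) *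
      (star (Matrix.posSemidef_conjTranspose_mul_self X).1.eigenvectorUnitary : Matrix _ _ ℂ) :=
    eq_traceNorm_mat X _ (hPpsd.add hNpsd) (by rw [← pow_two]; exact hsq)
  have htrP : P.trace = (∑ ab ∈ s, q ab : ℝ) := by
    rw [hPdef, Matrix.trace_sum]
    push_cast
    refine Finset.sum_congr rfl fun ab _ => ?_
    simp only [hD]
    rw [Matrix.trace_smul, Matrix.trace_kronecker, Matrix.trace_kronecker]
    simp [hρtr]
  have htrN : N.trace = (∑ ab ∈ s, q ab : ℝ) := by
    rw [hNdef, Matrix.trace_sum]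
    push_cast
    refine Finset.sum_congr rfl fun ab _ => ?_
    simp only [hD]
    rw [Matrix.trace_smul, Matrix.trace_kronecker, Matrix.trace_kronecker]
    simp [hρtr]
  show traceNorm X = 2 * ∑ ab ∈ s, q ab
  unfold traceNorm
  rw [← hsqrt, Matrix.trace_add, htrP, htrN]
  push_cast
  rw [Complex.add_re]
  simp
  ring
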